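/- The map g = ln ∘ f_transfer : [0,1] → ℝ^ℕ, defined by g(x)_n = max(ln x, -n) (with ln 0 = -∞ so g(0)_n = -n), is a continuous injective map satisfying g(max(λ·x, y)) = max(ln λ + g(x), g(y)) coordinatewise for all λ, x, y ∈ [0,1]. -/

import Mathlib

/-- Extended logarithm with `ln 0 = -∞`. -/
noncomputable def elog (x : ℝ) : EReal :=
  if x = 0 then ⊥ else ((Real.log x : ℝ) : EReal)

/-- The map `g : [0,1] → ℝ^ℕ`, `g(x)_n = max (ln x) (-n)` (with `ln 0 = -∞`,
so `g(0)_n = -n`). -/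
noncomputable def logTrunc (x : ℝ) : ℕ → ℝ :=
  fun n => ((elog x) ⊔ ((-(n : ℝ) : ℝ) : EReal)).toReal

lemma elog_zero : elog 0 = ⊥ := by simp [elog]

lemma elog_pos {x : ℝ} (h : x ≠ 0) : elog x = ((Real.log x : ℝ) : EReal) := by
  simp [elog, h]

lemma elog_le_zero {x : ℝ} (h0 : 0 ≤ x) (h1 : x ≤ 1) : elog x ≤ 0 := by
  rcases eq_or_lt_of_le h0 with h | h
  · simp [elog, ← h]
  · rw [elog_pos h.ne']
    exact_mod_cast EReal.coe_le_coe_iff.mpr (Real.log_nonpos h0 h1)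

lemma elog_mono {a b : ℝ} (ha : 0 ≤ a) (hab : a ≤ b) : elog a ≤ elog b := by
  rcases eq_or_lt_of_le ha with h | h
  · simp [elog, ← h]
  · rw [elog_pos h.ne', elog_pos (h.trans_le hab).ne']
    exact EReal.coe_le_coe_iff.mpr (Real.log_le_log h hab)

lemma elog_max {a b : ℝ} (ha : 0 ≤ a) (hb : 0 ≤ b) :
    elog (max a b) = max (elog a) (elog b) := by
  rcases le_total a b with h | h
  · rw [max_eq_right h, max_eq_right (elog_mono ha h)]
  · rw [max_eq_left h, max_eq_left (elog_mono hb h)]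

lemma elog_mul (a b : ℝ) : elog (a * b) = elog a + elog b := by
  rcases eq_or_ne a 0 with rfl | ha
  · simp [elog]
  rcases eq_or_ne b 0 with rfl | hb
  · simp [elog, ha]
  · rw [elog_pos (mul_ne_zero ha hb), elog_pos ha, elog_pos hb,
      Real.log_mul ha hb, EReal.coe_add]

lemma ereal_add_max (a c d : EReal) : a + max c d = max (a + c) (a + d) := by
  rcases le_total c d with h | h
  · rw [max_eq_right h, max_eq_right (add_le_add_right h a)]
  · rw [max_eq_left h, max_eq_left (add_le_add_right h a)]

lemma logTrunc_coe {x : ℝ} (h0 : 0 ≤ x) (h1 : x ≤ 1) (n : ℕ) :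
    ((logTrunc x n : ℝ) : EReal) = max (elog x) ((-(n : ℝ) : ℝ) : EReal) := by
  have hbot : max (elog x) ((-(n : ℝ) : ℝ) : EReal) ≠ ⊥ :=
    ne_bot_of_le_ne_bot (EReal.coe_ne_bot _) (le_max_right _ _)
  have htop : max (elog x) ((-(n : ℝ) : ℝ) : EReal) ≠ ⊤ :=
    ((max_le (elog_le_zero h0 h1)
      (by exact_mod_cast EReal.coe_le_coe_iff.mpr (neg_nonpos.mpr n.cast_nonneg))).trans_lt
      (by simp : (0 : EReal) < ⊤)).ne
  rw [logTrunc]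
  exact EReal.coe_toReal htop hbot

lemma logTrunc_eq_log {x : ℝ} (h0 : 0 ≤ x) (n : ℕ) :
    logTrunc x n = Real.log (max x (Real.exp (-(n : ℝ)))) := by
  rcases eq_or_lt_of_le h0 with h | h
  · rw [logTrunc, ← h, elog_zero]
    simp [max_eq_right (Real.exp_pos _).le, Real.log_exp]
    exact_mod_cast EReal.toReal_coe (n : ℝ)
  · rw [logTrunc, elog_pos h.ne']
    rcases le_total x (Real.exp (-(n : ℝ))) with hx | hx
    · have : Real.log x ≤ -(n : ℝ) := by
        calc Real.log x ≤ Real.log (Real.exp (-(n : ℝ))) := Real.log_le_log h hx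
        _ = -(n : ℝ) := Real.log_exp _
      rw [max_eq_right hx, Real.log_exp,
        max_eq_right (EReal.coe_le_coe_iff.mpr this)]
      simp
      exact_mod_cast EReal.toReal_coe (n : ℝ)
    · have : -(n : ℝ) ≤ Real.log x := by
        calc -(n : ℝ) = Real.log (Real.exp (-(n : ℝ))) := (Real.log_exp _).symm
        _ ≤ Real.log x := Real.log_le_log (Real.exp_pos _) hx
      rw [max_eq_left hx, max_eq_left (EReal.coe_le_coe_iff.mpr this)]
      simp

/-- `g` is continuous and injective on `[0,1]` and satisfies
`g (max (λ·x) y) = max (ln λ + g x) (g y)` coordinatewise for all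
`λ, x, y ∈ [0,1]`. -/
theorem logTrunc_embedding_affine :
    ContinuousOn logTrunc (Set.Icc (0 : ℝ) 1) ∧
    Set.InjOn logTrunc (Set.Icc (0 : ℝ) 1) ∧
    (∀ lam ∈ Set.Icc (0 : ℝ) 1, ∀ x ∈ Set.Icc (0 : ℝ) 1,
      ∀ y ∈ Set.Icc (0 : ℝ) 1, ∀ n : ℕ,
        ((logTrunc (max (lam * x) y) n : ℝ) : EReal) =
          max (elog lam + (logTrunc x n : ℝ)) ((logTrunc y n : ℝ) : EReal)) := by
  refine ⟨?_, ?_, ?_⟩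
  · -- continuity
    rw [continuousOn_pi]
    intro n
    refine ContinuousOn.congr (f := fun x => Real.log (max x (Real.exp (-(n : ℝ)))))
      ?_ (fun x hx => logTrunc_eq_log hx.1 n)
    exact Continuous.continuousOn ((continuous_id.max continuous_const).log
      fun x => (lt_max_of_lt_right (Real.exp_pos _)).ne')
  · -- injectivity
    intro a ha b hb hab
    by_contra hne
    wlog h : a < b generalizing a b
    · exact this hb ha hab.symm (Ne.symm hne) (lt_of_le_of_ne (not_lt.mp h) (Ne.symm hne))
    have hbpos : 0 < b := lt_of_le_of_lt ha.1 h
    set n : ℕ := ⌈-Real.log b⌉₊ + 1 with hn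
    have hlt : Real.exp (-(n : ℝ)) < b := by
      have h1 : -Real.log b ≤ (⌈-Real.log b⌉₊ : ℝ) := Nat.le_ceil _
      have h2 : -(n : ℝ) < Real.log b := by
        push_cast [hn]
        linarith
      calc Real.exp (-(n : ℝ)) < Real.exp (Real.log b) := Real.exp_lt_exp.mpr h2
      _ = b := Real.exp_log hbpos
    have e1 : logTrunc a n = Real.log (max a (Real.exp (-(n : ℝ)))) := logTrunc_eq_log ha.1 n
    have e2 : logTrunc b n = Real.log (max b (Real.exp (-(n : ℝ)))) := logTrunc_eq_log hb.1 n
    have : logTrunc a n < logTrunc b n := by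
      rw [e1, e2, max_eq_left hlt.le]
      exact Real.log_lt_log (lt_max_of_lt_right (Real.exp_pos _)) (max_lt h hlt)
    rw [hab] at this
    exact lt_irrefl _ this
  · -- affine identity
    rintro lam ⟨hl0, hl1⟩ x ⟨hx0, hx1⟩ y ⟨hy0, hy1⟩ n
    have hlx0 : 0 ≤ lam * x := mul_nonneg hl0 hx0
    have hlx1 : lam * x ≤ 1 := mul_le_one₀ hl1 hx0 hx1
    have hm0 : 0 ≤ max (lam * x) y := le_max_of_le_right hy0
    have hm1 : max (lam * x) y ≤ 1 := max_le hlx1 hy1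
    rw [logTrunc_coe hm0 hm1, logTrunc_coe hx0 hx1, logTrunc_coe hy0 hy1,
      elog_max hlx0 hy0, elog_mul, ereal_add_max]
    have hE : elog lam + ((-(n : ℝ) : ℝ) : EReal) ≤ ((-(n : ℝ) : ℝ) : EReal) := by
      calc elog lam + ((-(n : ℝ) : ℝ) : EReal) ≤ 0 + ((-(n : ℝ) : ℝ) : EReal) :=
        add_le_add_left (elog_le_zero hl0 hl1) _
      _ = _ := zero_add _
    conv_rhs => rw [max_max_max_comm]
    rw [max_eq_right hE]
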